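/- arXiv:0806.0585 — 2 statements merged into one kernel-verified Lean document; each statement's English description precedes it below -/
import Mathlib

section
/- For n ≥ 2, the number of monomials of the form a_{g1}^{(1)} a_{h1}^{(1)} ⋯ a_{gn}^{(n)} a_{hn}^{(n)} a_{g1+⋯+gn}^{(n+1)} a_{h1+⋯+hn}^{(n+1)} with g_i, h_i ∈ Z/2 (counted as multisets, i.e., distinct monomials in commuting variables) equals the analogous count for n−1 plus 3^n − 2^{n−1}. -/
open Finset

/-- The number of distinct degree-2 monomials
`a_{g₁}⁽¹⁾a_{h₁}⁽¹⁾⋯a_{gₙ}⁽ⁿ⁾a_{hₙ}⁽ⁿ⁾ a_{Σg}⁽ⁿ⁺¹⁾a_{Σh}⁽ⁿ⁺¹⁾`: two pairs `(g,h)` give the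
same monomial iff the unordered pairs `{gᵢ,hᵢ}` agree for every `i` and the unordered pair
of parity sums agrees. -/
def countM (n : ℕ) : ℕ :=
  ((Finset.univ : Finset ((Fin n → ZMod 2) × (Fin n → ZMod 2))).image
    (fun p => ((fun i => s(p.1 i, p.2 i) : Fin n → Sym2 (ZMod 2)),
                s(∑ i, p.1 i, ∑ i, p.2 i)))).card

def Aa : Sym2 (ZMod 2) → ZMod 2 := Sym2.lift ⟨fun a b => a + b, fun a b => by ring⟩
def Mm : Sym2 (ZMod 2) → ZMod 2 := Sym2.lift ⟨fun a b => a * b, fun a b => by ring⟩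
@[simp] lemma Aa_mk (a b : ZMod 2) : Aa s(a,b) = a + b := rfl
@[simp] lemma Mm_mk (a b : ZMod 2) : Mm s(a,b) = a * b := rfl

lemma sym2_rep : ∀ e : Sym2 (ZMod 2), s(Mm e, Mm e + Aa e) = e := by decide
lemma sym2_diag : ∀ e : Sym2 (ZMod 2), Aa e = 0 → s(Mm e, Mm e) = e := by decide
lemma sym2_odd : ∀ a b : ZMod 2, a + b = 1 → s(a,b) = s(0,1) := by decide
lemma sym2_flip : ∀ a b : ZMod 2, a + b = 1 → s(a+1,b+1) = s(a,b) := by decide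
lemma zsum : ∀ a b : ZMod 2, a + b = 0 → b = a := by decide
lemma zsq : ∀ x : ZMod 2, x * x = x := by decide
lemma addadd : ∀ x y : ZMod 2, x + (x + y) = y := by decide
lemma znot1 : ∀ x : ZMod 2, x ≠ 1 → x = 0 := by decide
lemma znot0 : ∀ x : ZMod 2, x ≠ 0 → x = 1 := by decide
lemma zneq : ∀ x y : ZMod 2, x ≠ y → x + 1 = y := by decide
lemma sym2_one : ∀ e : Sym2 (ZMod 2), Aa e = 1 → e = s(0,1) := by decide

def Cnd (n : ℕ) (f : Fin n → Sym2 (ZMod 2)) (s : Sym2 (ZMod 2)) : Prop :=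
  Aa s = ∑ i, Aa (f i) ∧ ((∀ i, Aa (f i) = 0) → Mm s = ∑ i, Mm (f i))

instance (n f s) : Decidable (Cnd n f s) := by unfold Cnd; infer_instance

lemma image_eq (n : ℕ) :
    ((Finset.univ : Finset ((Fin n → ZMod 2) × (Fin n → ZMod 2))).image
      (fun p => ((fun i => s(p.1 i, p.2 i) : Fin n → Sym2 (ZMod 2)),
                  s(∑ i, p.1 i, ∑ i, p.2 i)))) =
    univ.filter (fun q : (Fin n → Sym2 (ZMod 2)) × Sym2 (ZMod 2) => Cnd n q.1 q.2) := by
  ext ⟨f, s⟩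
  simp only [mem_image, mem_filter, mem_univ, true_and, Prod.mk.injEq, Prod.exists]
  constructor
  · rintro ⟨g, h, hf, rfl⟩
    have hfi : ∀ i, f i = s(g i, h i) := fun i => (congrFun hf i).symm
    constructor
    · simp only [hfi, Aa_mk]
      rw [← Finset.sum_add_distrib]
    · intro hd
      have hgh : ∀ i, h i = g i := by
        intro i
        have := hd i
        rw [hfi i, Aa_mk] at this
        exact zsum _ _ this
      simp only [hfi, Mm_mk, hgh, zsq]
  · rintro ⟨h1, h2⟩
    set g0 : Fin n → ZMod 2 := fun i => Mm (f i) with hg0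
    set h0 : Fin n → ZMod 2 := fun i => Mm (f i) + Aa (f i) with hh0
    have hrep : ∀ i, s(g0 i, h0 i) = f i := fun i => sym2_rep (f i)
    have hsum0 : ∑ i, g0 i + ∑ i, h0 i = Aa s := by
      rw [← Finset.sum_add_distrib, h1]
      exact Finset.sum_congr rfl fun i _ => addadd _ _
    by_cases hA : Aa s = 1
    · refine ⟨g0, h0, funext hrep, ?_⟩
      rw [sym2_odd _ _ (by rw [hsum0, hA])]
      exact (sym2_one s hA).symm
    · have hA0 : Aa s = 0 := znot1 _ hA
      by_cases hall : ∀ i, Aa (f i) = 0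
      · refine ⟨g0, h0, funext hrep, ?_⟩
        have hh0g0 : ∀ i, h0 i = g0 i := fun i => by
          simp only [hh0, hg0, hall i, add_zero]
        have hs2 : ∑ i, h0 i = ∑ i, g0 i := Finset.sum_congr rfl fun i _ => hh0g0 i
        rw [hs2, ← h2 hall]
        exact sym2_diag s hA0
      · push_neg at hall
        obtain ⟨j, hj⟩ := hall
        have hj1 : Aa (f j) = 1 := znot0 _ hj
        have hh : ∑ i, h0 i = ∑ i, g0 i := zsum _ _ (by rw [hsum0, hA0])
        by_cases hc : ∑ i, g0 i = Mm s
        · refine ⟨g0, h0, funext hrep, ?_⟩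
          rw [hh, hc]
          exact sym2_diag s hA0
        · set g1 : Fin n → ZMod 2 := Function.update g0 j (g0 j + 1) with hg1
          set h1' : Fin n → ZMod 2 := Function.update h0 j (h0 j + 1) with hh1
          have hab : g0 j + h0 j = 1 := by
            have := addadd (Mm (f j)) (Aa (f j))
            simp only [hg0, hh0]
            rw [this, hj1]
          have hrep1 : ∀ i, s(g1 i, h1' i) = f i := by
            intro i
            by_cases hij : i = j
            · subst hij
              simp only [hg1, hh1, Function.update_self]
              rw [sym2_flip _ _ hab]
              exact hrep i
            · simp only [hg1, hh1, Function.update_of_ne hij]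
              exact hrep i
          have hsg1 : ∑ i, g1 i = ∑ i, g0 i + 1 := by
            simp only [hg1]
            rw [Finset.sum_update_of_mem (mem_univ j),
              Finset.sum_eq_sum_sdiff_singleton_add (mem_univ j) g0]
            ring
          have hsh1 : ∑ i, h1' i = ∑ i, h0 i + 1 := by
            simp only [hh1]
            rw [Finset.sum_update_of_mem (mem_univ j),
              Finset.sum_eq_sum_sdiff_singleton_add (mem_univ j) h0]
            ring
          refine ⟨g1, h1', funext hrep1, ?_⟩
          rw [hsg1, hsh1, hh, zneq _ _ hc]
          exact sym2_diag s hA0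

lemma fiber_card (c m : ZMod 2) (b : Prop) [Decidable b] (hbc : b → c = 0) :
    (univ.filter fun s : Sym2 (ZMod 2) => Aa s = c ∧ (b → Mm s = m)).card
      = if b ∨ c = 1 then 1 else 2 := by
  by_cases hb : b
  · rw [hbc hb]
    simp only [hb, forall_true_left, true_or, if_true]
    revert m; decide
  · simp only [hb, false_or, false_implies, and_true]
    clear hbc hb
    revert c; decide

lemma card_filter_prod {α β : Type*} [Fintype α] [Fintype β] [DecidableEq α] [DecidableEq β]
    (C : α → β → Prop) [∀ a b, Decidable (C a b)] :
    (univ.filter fun q : α × β => C q.1 q.2).card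
      = ∑ a : α, (univ.filter fun b => C a b).card := by
  rw [Finset.card_eq_sum_card_fiberwise (f := Prod.fst) (t := univ) (fun x _ => mem_univ _)]
  refine Finset.sum_congr rfl fun a _ => ?_
  rw [Finset.filter_filter]
  apply Finset.card_bij (fun q _ => q.2)
  · rintro ⟨x, y⟩ hq
    simp only [mem_filter, mem_univ, true_and] at hq ⊢
    obtain ⟨h1, rfl⟩ := hq
    exact h1
  · rintro ⟨x, y⟩ hx ⟨x', y'⟩ hy h
    simp only [mem_filter, mem_univ, true_and] at hx hy
    obtain ⟨-, rfl⟩ := hx; obtain ⟨-, rfl⟩ := hy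
    simp_all
  · intro b hb
    simp only [mem_filter, mem_univ, true_and] at hb
    exact ⟨(a, b), by simp [hb], rfl⟩

def w (n : ℕ) (f : Fin n → Sym2 (ZMod 2)) : ℕ :=
  if (∀ i, Aa (f i) = 0) ∨ (∑ i, Aa (f i)) = 1 then 1 else 2

def T (n : ℕ) : ℕ := ∑ f : Fin n → Sym2 (ZMod 2), w n f
def cc (n : ℕ) : ℕ := ∑ f : Fin n → Sym2 (ZMod 2), if (∑ i, Aa (f i)) = 0 then 1 else 0
def dd (n : ℕ) : ℕ := ∑ f : Fin n → Sym2 (ZMod 2), if (∑ i, Aa (f i)) = 1 then 1 else 0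

lemma countM_eq (n : ℕ) : countM n = T n := by
  rw [countM, image_eq, card_filter_prod, T]
  refine Finset.sum_congr rfl fun f _ => ?_
  have h := fiber_card (∑ i, Aa (f i)) (∑ i, Mm (f i)) (∀ i, Aa (f i) = 0)
    (fun hb => Finset.sum_eq_zero fun i _ => hb i)
  rw [w, ← h]
  rfl

lemma univ_sym2 : (Finset.univ : Finset (Sym2 (ZMod 2))) = {s(0,0), s(0,1), s(1,1)} := by decide

lemma sum_succ (n : ℕ) (F : (Fin (n+1) → Sym2 (ZMod 2)) → ℕ) :
    ∑ f : Fin (n+1) → Sym2 (ZMod 2), F f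
      = ∑ x : Sym2 (ZMod 2), ∑ f : Fin n → Sym2 (ZMod 2), F (Fin.cons x f) := by
  have h := Fintype.sum_equiv (Fin.consEquiv (fun _ : Fin (n+1) => Sym2 (ZMod 2)))
    (fun p : Sym2 (ZMod 2) × (Fin n → Sym2 (ZMod 2)) => F (Fin.cons p.1 p.2)) F (fun p => rfl)
  rw [← h, Fintype.sum_prod_type]

lemma cons_sum (n : ℕ) (x : Sym2 (ZMod 2)) (f : Fin n → Sym2 (ZMod 2)) :
    ∑ i, Aa ((Fin.cons x f : Fin (n+1) → Sym2 (ZMod 2)) i) = Aa x + ∑ i, Aa (f i) := by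
  rw [Fin.sum_univ_succ]
  simp [Fin.cons_succ]

lemma cons_all (n : ℕ) (x : Sym2 (ZMod 2)) (f : Fin n → Sym2 (ZMod 2)) :
    (∀ i, Aa ((Fin.cons x f : Fin (n+1) → Sym2 (ZMod 2)) i) = 0)
      ↔ (Aa x = 0 ∧ ∀ i, Aa (f i) = 0) := by
  rw [Fin.forall_fin_succ]
  simp [Fin.cons_succ]

lemma cc_succ (n : ℕ) : cc (n+1) = 2 * cc n + dd n := by
  rw [cc, sum_succ, univ_sym2]
  rw [Finset.sum_insert (by decide), Finset.sum_insert (by decide), Finset.sum_singleton]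
  have e1 : ∀ f : Fin n → Sym2 (ZMod 2),
      (if (∑ i, Aa ((Fin.cons s(0,0) f : Fin (n+1) → Sym2 (ZMod 2)) i)) = 0 then 1 else 0)
        = (if (∑ i, Aa (f i)) = 0 then 1 else 0) := by
    intro f; rw [cons_sum]
    have : Aa s(0,0) = 0 := by decide
    rw [this, zero_add]
  have e2 : ∀ f : Fin n → Sym2 (ZMod 2),
      (if (∑ i, Aa ((Fin.cons s(1,1) f : Fin (n+1) → Sym2 (ZMod 2)) i)) = 0 then 1 else 0)
        = (if (∑ i, Aa (f i)) = 0 then 1 else 0) := by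
    intro f; rw [cons_sum]
    have : Aa s(1,1) = 0 := by decide
    rw [this, zero_add]
  have e3 : ∀ f : Fin n → Sym2 (ZMod 2),
      (if (∑ i, Aa ((Fin.cons s(0,1) f : Fin (n+1) → Sym2 (ZMod 2)) i)) = 0 then (1:ℕ) else 0)
        = (if (∑ i, Aa (f i)) = 1 then 1 else 0) := by
    intro f; rw [cons_sum]
    have h1 : Aa s(0,1) = 1 := by decide
    rw [h1]
    congr 1
    have : ∀ y : ZMod 2, (1 + y = 0) = (y = 1) := by decide
    exact this _
  rw [Finset.sum_congr rfl fun f _ => e1 f, Finset.sum_congr rfl fun f _ => e2 f,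
    Finset.sum_congr rfl fun f _ => e3 f]
  unfold cc dd; ring

lemma dd_succ (n : ℕ) : dd (n+1) = cc n + 2 * dd n := by
  rw [dd, sum_succ, univ_sym2]
  rw [Finset.sum_insert (by decide), Finset.sum_insert (by decide), Finset.sum_singleton]
  have e1 : ∀ f : Fin n → Sym2 (ZMod 2),
      (if (∑ i, Aa ((Fin.cons s(0,0) f : Fin (n+1) → Sym2 (ZMod 2)) i)) = 1 then 1 else 0)
        = (if (∑ i, Aa (f i)) = 1 then 1 else 0) := by
    intro f; rw [cons_sum]
    have : Aa s(0,0) = 0 := by decide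
    rw [this, zero_add]
  have e2 : ∀ f : Fin n → Sym2 (ZMod 2),
      (if (∑ i, Aa ((Fin.cons s(1,1) f : Fin (n+1) → Sym2 (ZMod 2)) i)) = 1 then 1 else 0)
        = (if (∑ i, Aa (f i)) = 1 then 1 else 0) := by
    intro f; rw [cons_sum]
    have : Aa s(1,1) = 0 := by decide
    rw [this, zero_add]
  have e3 : ∀ f : Fin n → Sym2 (ZMod 2),
      (if (∑ i, Aa ((Fin.cons s(0,1) f : Fin (n+1) → Sym2 (ZMod 2)) i)) = 1 then (1:ℕ) else 0)
        = (if (∑ i, Aa (f i)) = 0 then 1 else 0) := by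
    intro f; rw [cons_sum]
    have h1 : Aa s(0,1) = 1 := by decide
    rw [h1]
    congr 1
    have : ∀ y : ZMod 2, (1 + y = 1) = (y = 0) := by decide
    exact this _
  rw [Finset.sum_congr rfl fun f _ => e1 f, Finset.sum_congr rfl fun f _ => e2 f,
    Finset.sum_congr rfl fun f _ => e3 f]
  unfold cc dd; ring

lemma T_succ (n : ℕ) : T (n+1) = 2 * T n + (cc n + 2 * dd n) := by
  rw [T, sum_succ, univ_sym2]
  rw [Finset.sum_insert (by decide), Finset.sum_insert (by decide), Finset.sum_singleton]
  have e1 : ∀ x : Sym2 (ZMod 2), Aa x = 0 → ∀ f : Fin n → Sym2 (ZMod 2),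
      w (n+1) (Fin.cons x f) = w n f := by
    intro x hx f
    rw [w, w]
    refine if_congr ?_ rfl rfl
    rw [cons_all, cons_sum, hx, zero_add]
    simp [hx]
  have e3 : ∀ f : Fin n → Sym2 (ZMod 2),
      w (n+1) (Fin.cons s(0,1) f)
        = (if (∑ i, Aa (f i)) = 0 then 1 else 0) + 2 * (if (∑ i, Aa (f i)) = 1 then 1 else 0) := by
    intro f
    rw [w]
    have h1 : Aa s(0,1) = 1 := by decide
    have hcond : ((∀ i, Aa ((Fin.cons s(0,1) f : Fin (n+1) → Sym2 (ZMod 2)) i) = 0)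
        ∨ (∑ i, Aa ((Fin.cons s(0,1) f : Fin (n+1) → Sym2 (ZMod 2)) i)) = 1)
        ↔ (∑ i, Aa (f i)) = 0 := by
      rw [cons_all, cons_sum, h1]
      constructor
      · rintro (⟨h, -⟩ | h)
        · exact absurd h (by decide)
        · have : ∀ y : ZMod 2, 1 + y = 1 → y = 0 := by decide
          exact this _ h
      · intro h
        right
        rw [h, add_zero]
    rw [if_congr hcond rfl rfl]
    by_cases h : (∑ i, Aa (f i)) = 0
    · rw [if_pos h, if_pos h, if_neg (by rw [h]; decide)]
    · have h1' : (∑ i, Aa (f i)) = 1 := znot0 _ h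
      rw [if_neg h, if_neg h, if_pos h1']
  have d00 : Aa s(0,0) = 0 := by decide
  have d11 : Aa s(1,1) = 0 := by decide
  rw [Finset.sum_congr rfl fun f _ => e1 _ d00 f,
    Finset.sum_congr rfl fun f _ => e1 _ d11 f,
    Finset.sum_congr rfl fun f _ => e3 f,
    Finset.sum_add_distrib, ← Finset.mul_sum]
  unfold T cc dd; ring

lemma T_zero : T 0 = 1 := by decide
lemma cc_zero : cc 0 = 1 := by decide
lemma dd_zero : dd 0 = 0 := by decide

lemma cc_dd (n : ℕ) : cc n + dd n = 3 ^ n := by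
  have h : ∀ x : ZMod 2, ((if x = 0 then (1:ℕ) else 0) + if x = 1 then 1 else 0) = 1 := by decide
  rw [cc, dd, ← Finset.sum_add_distrib]
  rw [Finset.sum_congr rfl fun f _ => h (∑ i, Aa (f i))]
  rw [Finset.sum_const, smul_eq_mul, mul_one, Finset.card_univ, Fintype.card_fun]
  norm_num
  rfl

lemma cc_eq_dd (n : ℕ) : cc n = dd n + 1 := by
  induction n with
  | zero => rw [cc_zero, dd_zero]
  | succ n ih => rw [cc_succ, dd_succ]; omega

lemma key (n : ℕ) : 2 * T n + 2 ^ (n + 1) = 3 ^ (n + 1) + 1 := by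
  induction n with
  | zero => rw [T_zero]; norm_num
  | succ n ih =>
    have h1 := cc_dd n
    have h2 := cc_eq_dd n
    have h3 : (3:ℕ) ^ (n + 2) = 3 * 3 ^ (n + 1) := by ring
    have h4 : (3:ℕ) ^ (n + 1) = 3 * 3 ^ n := by ring
    have h5 : (2:ℕ) ^ (n + 2) = 2 * 2 ^ (n + 1) := by ring
    rw [T_succ]
    omega

/-- For `n ≥ 2`, the number of such monomials equals the analogous count for `n-1`
plus `3^n − 2^(n-1)`. -/
theorem stmt3 (n : ℕ) (hn : 2 ≤ n) :
    countM n = countM (n - 1) + (3 ^ n - 2 ^ (n - 1)) := by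
  obtain ⟨m, rfl⟩ : ∃ m, n = m + 1 := ⟨n - 1, by omega⟩
  simp only [Nat.add_sub_cancel]
  rw [countM_eq, countM_eq]
  have h1 := key m
  have h2 := key (m + 1)
  have h3 : (3:ℕ) ^ (m + 2) = 3 * 3 ^ (m + 1) := by ring
  have h5 : (2:ℕ) ^ (m + 2) = 2 * 2 ^ (m + 1) := by ring
  have h6 : (2:ℕ) ^ (m + 1) = 2 * 2 ^ m := by ring
  have h7 : 1 ≤ 2 ^ m := Nat.one_le_two_pow
  omega
end

section
/- For n ≥ 1, the monoid of exponent vectors of the toric algebra A_n = K[a_{g_1}^{(1)}⋯a_{g_n}^{(n)} a_{g_1+⋯+g_n}^{(n+1)} : g_i ∈ Z/2] has degree-2 part of cardinality (3/2)·3^n − 2^n + 1/2; i.e., the number of multisets of size 2 of elements of (Z/2)^n, counted up to the coordinatewise-unordered-pair equivalence that also identifies the pair of parity sums, is (3^{n+1} − 2^{n+1} + 1)/2. -/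
open Finset

namespace Stmt17Aux

/-- sum of the two entries of an unordered pair. -/
def sig : Sym2 (ZMod 2) → ZMod 2 := Sym2.lift ⟨fun a b => a + b, fun a b => add_comm a b⟩

/-- product of the two entries of an unordered pair. -/
def mm : Sym2 (ZMod 2) → ZMod 2 := Sym2.lift ⟨fun a b => a * b, fun a b => mul_comm a b⟩

@[simp] lemma sig_mk (a b : ZMod 2) : sig s(a, b) = a + b := rfl
@[simp] lemma mm_mk (a b : ZMod 2) : mm s(a, b) = a * b := rfl

/-- canonical representative of an unordered pair. -/
def pick : Sym2 (ZMod 2) → ZMod 2 × ZMod 2 := fun s =>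
  if s = s((0 : ZMod 2), (0 : ZMod 2)) then (0, 0)
  else if s = s((0 : ZMod 2), (1 : ZMod 2)) then (0, 1) else (1, 1)

lemma pick_spec : ∀ s : Sym2 (ZMod 2), s((pick s).1, (pick s).2) = s := by decide

lemma pick_diag : ∀ s : Sym2 (ZMod 2), s.IsDiag →
    (pick s).1 = (pick s).2 ∧ mm s = (pick s).1 := by decide

lemma sig_pick : ∀ s : Sym2 (ZMod 2), sig s = (pick s).1 + (pick s).2 := by decide

lemma sig_of_not_isDiag : ∀ s : Sym2 (ZMod 2), ¬ s.IsDiag → sig s = 1 := by decide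

lemma sig_of_isDiag : ∀ s : Sym2 (ZMod 2), s.IsDiag → sig s = 0 := by decide

lemma sig_diag : ∀ t : ZMod 2, sig (Sym2.diag t) = 0 := by decide

lemma flip_lemma : ∀ (s : Sym2 (ZMod 2)) (a b : ZMod 2), sig s = a + b →
    s = s(a, b) ∨ s = s(a + 1, b + 1) := by decide

lemma zmod_solve : ∀ a b : ZMod 2, a + b = 1 → b = a + 1 := by decide

lemma mul_self_zmod : ∀ a : ZMod 2, a * a = a := by decide

lemma card_sig_fiber : ∀ c : ZMod 2,
    (Finset.univ.filter (fun s : Sym2 (ZMod 2) => sig s = c)).card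
      = if c = 0 then 2 else 1 := by decide

lemma card_isDiag : (Finset.univ.filter (fun s : Sym2 (ZMod 2) => s.IsDiag)).card = 2 := by
  decide

lemma card_sym2 : Fintype.card (Sym2 (ZMod 2)) = 3 := by decide

/-- The set of invariants `(f, s)` actually achieved. -/
def T (n : ℕ) : Finset ((Fin n → Sym2 (ZMod 2)) × Sym2 (ZMod 2)) :=
  Finset.univ.filter (fun x => sig x.2 = ∑ i, sig (x.1 i) ∧
    ((∀ i, (x.1 i).IsDiag) → x.2 = Sym2.diag (∑ i, mm (x.1 i))))

lemma image_eq (n : ℕ) :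
    ((Finset.univ : Finset ((Fin n → ZMod 2) × (Fin n → ZMod 2))).image
      (fun p => ((fun i => s(p.1 i, p.2 i) : Fin n → Sym2 (ZMod 2)),
                  s(∑ i, p.1 i, ∑ i, p.2 i)))) = T n := by
  ext ⟨f, s⟩
  simp only [T, mem_image, mem_filter, mem_univ, true_and, Prod.mk.injEq]
  constructor
  · rintro ⟨⟨g, h⟩, hf, hs⟩
    subst hf; subst hs
    constructor
    · simp [Finset.sum_add_distrib]
    · intro hd
      have hgh : ∀ i, g i = h i := fun i => (Sym2.mk_isDiag_iff).mp (hd i)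
      have hmm : ∀ i, mm s(g i, h i) = g i := by
        intro i; rw [mm_mk, ← hgh i, mul_self_zmod]
      have hsum : (∑ i, h i) = ∑ i, g i := by
        exact Finset.sum_congr rfl fun i _ => (hgh i).symm
      simp only [hmm, hsum]
      rfl
  · rintro ⟨h1, h2⟩
    set g0 : Fin n → ZMod 2 := fun i => (pick (f i)).1 with hg0
    set h0 : Fin n → ZMod 2 := fun i => (pick (f i)).2 with hh0
    have hf0 : ∀ i, s(g0 i, h0 i) = f i := fun i => pick_spec (f i)
    have hsum : sig s = (∑ i, g0 i) + (∑ i, h0 i) := by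
      rw [h1, ← Finset.sum_add_distrib]
      exact Finset.sum_congr rfl fun i _ => sig_pick (f i)
    by_cases hd : ∀ i, (f i).IsDiag
    · -- all diagonal: s is forced
      have hgh : ∀ i, g0 i = h0 i := fun i => (pick_diag (f i) (hd i)).1
      have hmmg : ∀ i, mm (f i) = g0 i := fun i => (pick_diag (f i) (hd i)).2
      refine ⟨(g0, h0), funext hf0, ?_⟩
      have hsum2 : (∑ i, h0 i) = ∑ i, g0 i :=
        Finset.sum_congr rfl fun i _ => (hgh i).symm
      have : s = Sym2.diag (∑ i, g0 i) := by
        rw [h2 hd]; congr 1; exact Finset.sum_congr rfl fun i _ => hmmg i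
      rw [this, hsum2]; rfl
    · rcases flip_lemma s (∑ i, g0 i) (∑ i, h0 i) hsum with hcase | hcase
      · exact ⟨(g0, h0), funext hf0, hcase.symm⟩
      · push_neg at hd
        obtain ⟨i0, hi0⟩ := hd
        refine ⟨(Function.update g0 i0 (h0 i0), Function.update h0 i0 (g0 i0)),
          funext ?_, ?_⟩
        · intro i
          by_cases hi : i = i0
          · subst hi
            simp only [Function.update_self]
            rw [Sym2.eq_swap]; exact hf0 i
          · simp only [Function.update_of_ne hi]; exact hf0 i
        · have hkey : g0 i0 + h0 i0 = 1 := by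
            rw [← sig_pick (f i0)]; exact sig_of_not_isDiag _ hi0
          have hsg : (∑ i, Function.update g0 i0 (h0 i0) i) = (∑ i, g0 i) + 1 := by
            rw [Finset.sum_update_of_mem (mem_univ i0)]
            have : (∑ i, g0 i) = g0 i0 + ∑ i ∈ Finset.univ \ {i0}, g0 i := by
              rw [Finset.sdiff_singleton_eq_erase, Finset.add_sum_erase _ _ (mem_univ i0)]
            rw [this]
            have h0eq : h0 i0 = g0 i0 + 1 := zmod_solve _ _ hkey
            rw [h0eq]; ring
          have hsh : (∑ i, Function.update h0 i0 (g0 i0) i) = (∑ i, h0 i) + 1 := by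
            rw [Finset.sum_update_of_mem (mem_univ i0)]
            have : (∑ i, h0 i) = h0 i0 + ∑ i ∈ Finset.univ \ {i0}, h0 i := by
              rw [Finset.sdiff_singleton_eq_erase, Finset.add_sum_erase _ _ (mem_univ i0)]
            rw [this]
            have hg0eq : g0 i0 = h0 i0 + 1 := by
              apply zmod_solve; rw [add_comm]; exact hkey
            rw [hg0eq]; ring
          rw [hsg, hsh]; exact hcase.symm

def cfun {n : ℕ} (f : Fin n → Sym2 (ZMod 2)) : ZMod 2 := ∑ i, sig (f i)

lemma card_fun (n : ℕ) : Fintype.card (Fin n → Sym2 (ZMod 2)) = 3 ^ n := by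
  rw [Fintype.card_fun, card_sym2, Fintype.card_fin]

lemma T_card (n : ℕ) :
    (T n).card = 3 ^ n +
      (Finset.univ.filter
        (fun f : Fin n → Sym2 (ZMod 2) => ¬ (∀ i, (f i).IsDiag) ∧ cfun f = 0)).card := by
  classical
  rw [T, Finset.card_filter, Fintype.sum_prod_type]
  have hW : ∀ f : Fin n → Sym2 (ZMod 2),
      (∑ s : Sym2 (ZMod 2), if sig s = ∑ i, sig (f i) ∧
          ((∀ i, (f i).IsDiag) → s = Sym2.diag (∑ i, mm (f i))) then 1 else 0)
        = 1 + (if ¬ (∀ i, (f i).IsDiag) ∧ cfun f = 0 then 1 else 0) := by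
    intro f
    by_cases hd : ∀ i, (f i).IsDiag
    · have hc : (∑ i, sig (f i)) = 0 := by
        rw [Finset.sum_eq_zero]; intro i _; exact sig_of_isDiag _ (hd i)
      have : ∀ s : Sym2 (ZMod 2),
          (sig s = ∑ i, sig (f i) ∧
            ((∀ i, (f i).IsDiag) → s = Sym2.diag (∑ i, mm (f i))))
          ↔ s = Sym2.diag (∑ i, mm (f i)) := by
        intro s
        constructor
        · rintro ⟨-, h⟩; exact h hd
        · rintro rfl; exact ⟨by rw [hc, sig_diag], fun _ => rfl⟩
      rw [Finset.sum_congr rfl (fun s _ => if_congr (this s) rfl rfl),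
        Finset.sum_ite_eq' Finset.univ (Sym2.diag (∑ i, mm (f i))) (fun _ => 1),
        if_pos (mem_univ _)]
      simp [hd]
    · have : ∀ s : Sym2 (ZMod 2),
          (sig s = ∑ i, sig (f i) ∧
            ((∀ i, (f i).IsDiag) → s = Sym2.diag (∑ i, mm (f i))))
          ↔ sig s = cfun f := by
        intro s; unfold cfun
        constructor
        · rintro ⟨h, -⟩; exact h
        · intro h; exact ⟨h, fun h' => absurd h' hd⟩
      rw [Finset.sum_congr rfl (fun s _ => if_congr (this s) rfl rfl),
        ← Finset.card_filter, card_sig_fiber]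
      by_cases hc : cfun f = 0 <;> simp [hc, hd]
  rw [Finset.sum_congr rfl (fun f _ => hW f), Finset.sum_add_distrib]
  congr 1
  · simp [card_fun n]
  · rw [← Finset.card_filter]

lemma allDiag_card (n : ℕ) :
    (Finset.univ.filter (fun f : Fin n → Sym2 (ZMod 2) => ∀ i, (f i).IsDiag)).card
      = 2 ^ n := by
  classical
  have : (Finset.univ.filter (fun f : Fin n → Sym2 (ZMod 2) => ∀ i, (f i).IsDiag))
      = Fintype.piFinset (fun _ : Fin n => Finset.univ.filter Sym2.IsDiag) := by
    ext f; simp [Fintype.mem_piFinset]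
  rw [this, Fintype.card_piFinset]
  simp [card_isDiag]

lemma E_card (n : ℕ) :
    (Finset.univ.filter (fun f : Fin n → Sym2 (ZMod 2) => cfun f = 0)).card
      = 2 ^ n +
        (Finset.univ.filter
          (fun f : Fin n → Sym2 (ZMod 2) => ¬ (∀ i, (f i).IsDiag) ∧ cfun f = 0)).card := by
  classical
  have hsplit : (Finset.univ.filter (fun f : Fin n → Sym2 (ZMod 2) => cfun f = 0))
      = (Finset.univ.filter (fun f : Fin n → Sym2 (ZMod 2) => ∀ i, (f i).IsDiag))
        ∪ (Finset.univ.filter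
            (fun f : Fin n → Sym2 (ZMod 2) => ¬ (∀ i, (f i).IsDiag) ∧ cfun f = 0)) := by
    ext f
    simp only [mem_filter, mem_univ, true_and, mem_union]
    constructor
    · intro hc
      by_cases hd : ∀ i, (f i).IsDiag
      · exact Or.inl hd
      · exact Or.inr ⟨hd, hc⟩
    · rintro (hd | ⟨-, hc⟩)
      · rw [cfun, Finset.sum_eq_zero]; intro i _; exact sig_of_isDiag _ (hd i)
      · exact hc
  rw [hsplit, Finset.card_union_of_disjoint, allDiag_card]
  rw [Finset.disjoint_left]
  intro f hf hf'
  simp only [mem_filter] at hf hf'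
  exact hf'.2.1 hf.2

def eps : ZMod 2 → ℤ := fun a => if a = 0 then 1 else -1

lemma eps_add : ∀ a b : ZMod 2, eps (a + b) = eps a * eps b := by decide

lemma eps_sum {ι : Type*} (s : Finset ι) (g : ι → ZMod 2) :
    eps (∑ i ∈ s, g i) = ∏ i ∈ s, eps (g i) := by
  classical
  induction s using Finset.cons_induction with
  | empty => simp [eps]
  | cons a s ha ih => rw [Finset.sum_cons, Finset.prod_cons, eps_add, ih]

lemma eps_sum_sym2 : (∑ s : Sym2 (ZMod 2), eps (sig s)) = 1 := by decide

lemma char_sum (n : ℕ) : (∑ f : Fin n → Sym2 (ZMod 2), eps (cfun f)) = 1 := by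
  classical
  have h1 : (∑ f : Fin n → Sym2 (ZMod 2), eps (cfun f))
      = ∑ f : Fin n → Sym2 (ZMod 2), ∏ i, eps (sig (f i)) := by
    exact Finset.sum_congr rfl fun f _ => eps_sum _ _
  rw [h1]
  have h2 := Finset.prod_univ_sum (fun _ : Fin n => (Finset.univ : Finset (Sym2 (ZMod 2))))
    (fun _ s => eps (sig s))
  rw [Fintype.piFinset_univ] at h2
  rw [← h2]
  simp [eps_sum_sym2]

lemma twoE (n : ℕ) :
    2 * (Finset.univ.filter (fun f : Fin n → Sym2 (ZMod 2) => cfun f = 0)).card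
      = 3 ^ n + 1 := by
  classical
  have hsum := char_sum n
  have hite : (∑ f : Fin n → Sym2 (ZMod 2), eps (cfun f))
      = ∑ f : Fin n → Sym2 (ZMod 2), (if cfun f = 0 then (1 : ℤ) else -1) :=
    Finset.sum_congr rfl fun f _ => rfl
  rw [hite, Finset.sum_ite, Finset.sum_const, Finset.sum_const] at hsum
  have htot := Finset.card_filter_add_card_filter_not
    (s := (Finset.univ : Finset (Fin n → Sym2 (ZMod 2)))) (p := fun f => cfun f = 0)
  rw [Finset.card_univ, card_fun n] at htot
  set E := (Finset.univ.filter (fun f : Fin n → Sym2 (ZMod 2) => cfun f = 0)).card with hE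
  set O := (Finset.univ.filter (fun f : Fin n → Sym2 (ZMod 2) => ¬ cfun f = 0)).card with hO
  simp only [nsmul_eq_mul, mul_one, mul_neg] at hsum
  omega

lemma countM_eq (n : ℕ) : 2 * countM n + 2 ^ (n + 1) = 3 ^ (n + 1) + 1 := by
  have h4 := twoE n
  rw [E_card n] at h4
  rw [show countM n = (T n).card by rw [countM, image_eq], T_card n,
    show (3 : ℕ) ^ (n + 1) = 3 * 3 ^ n by ring, show (2 : ℕ) ^ (n + 1) = 2 * 2 ^ n by ring]
  generalize hB : (Finset.univ.filter
      (fun f : Fin n → Sym2 (ZMod 2) => ¬ (∀ i, (f i).IsDiag) ∧ cfun f = 0)).card = B at h4 ⊢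
  clear hB
  omega

end Stmt17Aux

/-- For `n ≥ 1`, the degree-2 part of the monoid of exponent vectors of `A_n` has cardinality
`(3^{n+1} − 2^{n+1} + 1)/2 = (3/2)·3^n − 2^n + 1/2`. -/
theorem stmt17 (n : ℕ) (hn : 1 ≤ n) :
    2 * countM n = 3 ^ (n + 1) - 2 ^ (n + 1) + 1 ∧
    (countM n : ℚ) = (3 / 2) * 3 ^ n - 2 ^ n + 1 / 2 := by
  have h := Stmt17Aux.countM_eq n
  have hle : (2 : ℕ) ^ (n + 1) ≤ 3 ^ (n + 1) := Nat.pow_le_pow_left (by norm_num) _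
  constructor
  · omega
  · have hq : (2 : ℚ) * countM n + 2 ^ (n + 1) = 3 ^ (n + 1) + 1 := by
      exact_mod_cast h
    rw [pow_succ, pow_succ] at hq
    linarith
end
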